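/- Let G be a connected strongly regular graph with parameters (v,k,λ,μ) satisfying k − 2λ − 1 > 0, and let C be a clique of G with q ≥ 3 vertices. Then |N(C)| > 2k − λ − 2, where N(C) is the set of vertices outside C adjacent to some vertex of C. -/

import Mathlib

/-- In a connected strongly regular graph with parameters `(v,k,λ,μ)` satisfying
`k − 2λ − 1 > 0`, the neighborhood of any clique `C` with at least 3 vertices has
more than `2k − λ − 2` vertices. -/
theorem srg_clique_neighborhood {V : Type*} [Fintype V] [DecidableEq V]
    (G : SimpleGraph V) [DecidableRel G.Adj] (v k l m : ℕ)
    (hG : G.IsSRGWith v k l m) (hconn : G.Connected)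
    (hkl : (k : ℤ) - 2 * (l : ℤ) - 1 > 0)
    (C : Finset V) (hC : G.IsClique (C : Set V)) (hq : 3 ≤ C.card) :
    ((Finset.univ.filter (fun u : V =>
        u ∉ C ∧ ∃ w ∈ C, G.Adj u w)).card : ℤ) > 2 * (k : ℤ) - (l : ℤ) - 2 := by
  classical
  -- obtain three distinct vertices of C
  obtain ⟨x, hx⟩ := Finset.card_pos.mp (by omega : 0 < C.card)
  have h2 : 0 < (C.erase x).card := by
    rw [Finset.card_erase_of_mem hx]; omega
  obtain ⟨y, hy⟩ := Finset.card_pos.mp h2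
  have h3 : 0 < ((C.erase x).erase y).card := by
    rw [Finset.card_erase_of_mem hy, Finset.card_erase_of_mem hx]; omega
  obtain ⟨z, hz⟩ := Finset.card_pos.mp h3
  obtain ⟨hyx, hyC⟩ := Finset.mem_erase.mp hy
  obtain ⟨hzy, hz'⟩ := Finset.mem_erase.mp hz
  obtain ⟨hzx, hzC⟩ := Finset.mem_erase.mp hz'
  -- neighbor counting inside C
  have hNC : ∀ w ∈ C, (G.neighborFinset w ∩ C) = C.erase w := by
    intro w hw
    ext u
    simp only [Finset.mem_inter, SimpleGraph.mem_neighborFinset, Finset.mem_erase]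
    constructor
    · rintro ⟨hadj, hu⟩
      exact ⟨(G.ne_of_adj hadj).symm, hu⟩
    · rintro ⟨hne, hu⟩
      exact ⟨hC hw hu (Ne.symm hne), hu⟩
  have hA : ∀ w ∈ C, (G.neighborFinset w \ C).card + (C.card - 1) = k := by
    intro w hw
    have h := Finset.card_inter_add_card_sdiff (G.neighborFinset w) C
    rw [hNC w hw, Finset.card_erase_of_mem hw] at h
    have hdeg : (G.neighborFinset w).card = k := hG.regular w
    omega
  have hPair : ∀ a ∈ C, ∀ b ∈ C, a ≠ b →
      ((G.neighborFinset a ∩ G.neighborFinset b) \ C).card + (C.card - 2) = l := by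
    intro a ha b hb hab
    have hadj : G.Adj a b := hC ha hb hab
    have hl := hG.of_adj a b hadj
    have hto : (G.commonNeighbors a b).toFinset
        = G.neighborFinset a ∩ G.neighborFinset b := by
      ext u
      rw [Set.mem_toFinset]
      simp [SimpleGraph.commonNeighbors, SimpleGraph.mem_neighborFinset]
    have hcard : (G.neighborFinset a ∩ G.neighborFinset b).card = l := by
      rw [← hto, Set.toFinset_card]; exact hl
    have hinter : (G.neighborFinset a ∩ G.neighborFinset b) ∩ C
        = (C.erase a).erase b := by
      ext u
      simp only [Finset.mem_inter, Finset.mem_erase, SimpleGraph.mem_neighborFinset]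
      constructor
      · rintro ⟨⟨h1, h2⟩, hu⟩
        exact ⟨(G.ne_of_adj h2).symm, (G.ne_of_adj h1).symm, hu⟩
      · rintro ⟨hnb, hna, hu⟩
        exact ⟨⟨hC ha hu (Ne.symm hna), hC hb hu (Ne.symm hnb)⟩, hu⟩
    have h := Finset.card_inter_add_card_sdiff
      (G.neighborFinset a ∩ G.neighborFinset b) C
    rw [hinter, Finset.card_erase_of_mem (Finset.mem_erase.mpr ⟨hab.symm, hb⟩),
      Finset.card_erase_of_mem ha, hcard] at h
    omega
  set N := Finset.univ.filter (fun u : V => u ∉ C ∧ ∃ w ∈ C, G.Adj u w) with hN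
  have hsub : ∀ w ∈ C, G.neighborFinset w \ C ⊆ N := by
    intro w hw u hu
    obtain ⟨hadj, hnC⟩ := Finset.mem_sdiff.mp hu
    rw [SimpleGraph.mem_neighborFinset] at hadj
    simp only [hN, Finset.mem_filter, Finset.mem_univ, true_and]
    exact ⟨hnC, w, hw, hadj.symm⟩
  set A := G.neighborFinset x \ C with hAdef
  set B := G.neighborFinset y \ C with hBdef
  set D := G.neighborFinset z \ C with hDdef
  have hABD : A ∪ B ∪ D ⊆ N :=
    Finset.union_subset (Finset.union_subset (hsub x hx) (hsub y hyC)) (hsub z hzC)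
  have hcardN : (A ∪ B ∪ D).card ≤ N.card := Finset.card_le_card hABD
  have e1 : (A ∪ B ∪ D).card + ((A ∪ B) ∩ D).card = (A ∪ B).card + D.card :=
    Finset.card_union_add_card_inter _ _
  have e2 : (A ∪ B).card + (A ∩ B).card = A.card + B.card :=
    Finset.card_union_add_card_inter _ _
  have e3 : ((A ∪ B) ∩ D).card ≤ (A ∩ D).card + (B ∩ D).card := by
    rw [Finset.union_inter_distrib_right]
    exact Finset.card_union_le _ _
  -- identify pairwise intersections
  have iAB : A ∩ B = (G.neighborFinset x ∩ G.neighborFinset y) \ C := by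
    ext u; simp only [hAdef, hBdef, Finset.mem_inter, Finset.mem_sdiff]; tauto
  have iAD : A ∩ D = (G.neighborFinset x ∩ G.neighborFinset z) \ C := by
    ext u; simp only [hAdef, hDdef, Finset.mem_inter, Finset.mem_sdiff]; tauto
  have iBD : B ∩ D = (G.neighborFinset y ∩ G.neighborFinset z) \ C := by
    ext u; simp only [hBdef, hDdef, Finset.mem_inter, Finset.mem_sdiff]; tauto
  have hAx : A.card + (C.card - 1) = k := hA x hx
  have hAy : B.card + (C.card - 1) = k := hA y hyC
  have hAz : D.card + (C.card - 1) = k := hA z hzC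
  have pXY := hPair x hx y hyC (Ne.symm hyx)
  have pXZ := hPair x hx z hzC (Ne.symm hzx)
  have pYZ := hPair y hyC z hzC (Ne.symm hzy)
  rw [← iAB] at pXY
  rw [← iAD] at pXZ
  rw [← iBD] at pYZ
  omega
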